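/- Let b_x = Γ_p Γ_x + Γ_q Γ_x and, for θ ∈ ℝ, B_θ = I₄ + (θ/2) • b_x. Then for all real x, p, q: B_θ (x•Γ_x + p•Γ_p + q•Γ_q) B_{−θ} = (x + (p−q)θ)•Γ_x + (p + xθ + (p−q)θ²/2)•Γ_p + (q + xθ + (p−q)θ²/2)•Γ_q, and B_θ Γ_c B_{−θ} = Γ_c for c ∈ {t, y, z}. -/

import Mathlib

open Quaternion Matrix

/-- The split quaternions, with K = i, L = j, KL = k. -/
notation "ℍ'" => QuaternionAlgebra ℝ (-1) 0 1

/-- A = ℍ' ⊗_ℝ ℂ, realized as the quaternion algebra over ℂ with i² = −1, j² = 1. -/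
abbrev SplitQC := QuaternionAlgebra ℂ (-1) 0 1

namespace SplitQC
/-- K, the split-quaternion unit with K² = −1 -/
def K : SplitQC := ⟨0, 1, 0, 0⟩
/-- L, the split-quaternion unit with L² = 1 -/
def L : SplitQC := ⟨0, 0, 1, 0⟩
/-- KL, with (KL)² = 1 -/
def KL : SplitQC := ⟨0, 0, 0, 1⟩
/-- ℓ = 1 ⊗ i, the complex unit -/
def ll : SplitQC := ⟨Complex.I, 0, 0, 0⟩
end SplitQC

open SplitQC

/-- Index set {x, y, z, t, q, p} for the gamma matrices. -/
inductive Idx | x | y | z | t | q | p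
deriving DecidableEq

/-- The gamma matrices generating Cl(4,2). -/
def Γ : Idx → Matrix (Fin 4) (Fin 4) SplitQC
| Idx.x => !![0,0,0,1; 0,0,1,0; 0,1,0,0; 1,0,0,0]
| Idx.y => !![0,0,0,-ll; 0,0,ll,0; 0,-ll,0,0; ll,0,0,0]
| Idx.z => !![0,0,1,0; 0,0,0,-1; 1,0,0,0; 0,-1,0,0]
| Idx.t => !![0,0,L,0; 0,0,0,L; -L,0,0,0; 0,-L,0,0]
| Idx.q => !![0,0,K,0; 0,0,0,K; -K,0,0,0; 0,-K,0,0]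
| Idx.p => !![0,0,KL,0; 0,0,0,KL; -KL,0,0,0; 0,-KL,0,0]

/-- The metric of signature (4,2). -/
def g : Idx → Idx → ℝ
| Idx.x, Idx.x => 1 | Idx.y, Idx.y => 1 | Idx.z, Idx.z => 1 | Idx.q, Idx.q => 1
| Idx.t, Idx.t => -1 | Idx.p, Idx.p => -1
| _, _ => 0


noncomputable def ee (s : ℝ) : SplitQC := ⟨0, s/2, 0, s/2⟩

noncomputable def Bm (s : ℝ) : Matrix (Fin 4) (Fin 4) SplitQC :=
  !![1, ee s, 0, 0; ee s, 1, 0, 0; 0, 0, 1, -ee s; 0, 0, -ee s, 1]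

noncomputable def M (x p q : ℝ) : Matrix (Fin 4) (Fin 4) SplitQC :=
  !![0, 0, ⟨0,q,0,p⟩, ⟨(x:ℂ),0,0,0⟩;
     0, 0, ⟨(x:ℂ),0,0,0⟩, ⟨0,q,0,p⟩;
     ⟨0,-q,0,-p⟩, ⟨(x:ℂ),0,0,0⟩, 0, 0;
     ⟨(x:ℂ),0,0,0⟩, ⟨0,-q,0,-p⟩, 0, 0]

set_option maxHeartbeats 1000000 in
lemma hB (s : ℝ) :
    (1 : Matrix (Fin 4) (Fin 4) SplitQC) + (s / 2) • (Γ Idx.p * Γ Idx.x + Γ Idx.q * Γ Idx.x)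
      = Bm s := by
  refine Matrix.ext fun i j => ?_
  fin_cases i <;> fin_cases j <;>
    simp [Γ, Bm, ee, K, L, KL, Matrix.vecHead, Matrix.vecTail, Matrix.mul_apply, Fin.sum_univ_four, Matrix.one_apply,
      QuaternionAlgebra.ext_iff, Complex.ext_iff]

set_option maxHeartbeats 1000000 in
lemma hM (x p q : ℝ) :
    x • Γ Idx.x + p • Γ Idx.p + q • Γ Idx.q = M x p q := by
  refine Matrix.ext fun i j => ?_
  fin_cases i <;> fin_cases j <;>
    simp [Γ, M, K, L, KL, Matrix.vecHead, Matrix.vecTail, QuaternionAlgebra.ext_iff, Complex.ext_iff]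

set_option maxHeartbeats 2000000 in
lemma key1 (θ x p q : ℝ) :
    Bm θ * M x p q * Bm (-θ) =
      M (x + (p - q) * θ) (p + x * θ + (p - q) * θ ^ 2 / 2)
        (q + x * θ + (p - q) * θ ^ 2 / 2) := by
  refine Matrix.ext fun i j => ?_
  fin_cases i <;> fin_cases j <;>
    (simp [Bm, M, ee, Matrix.vecHead, Matrix.vecTail, Matrix.mul_apply, Fin.sum_univ_four,
        QuaternionAlgebra.ext_iff, Complex.ext_iff, ← Complex.ofReal_pow] <;>
      ring_nf <;> norm_num)

set_option maxHeartbeats 2000000 in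
lemma key2 (θ : ℝ) (c : Idx) (hc : c = Idx.t ∨ c = Idx.y ∨ c = Idx.z) :
    Bm θ * Γ c * Bm (-θ) = Γ c := by
  rcases hc with rfl | rfl | rfl <;>
  · refine Matrix.ext fun i j => ?_
    fin_cases i <;> fin_cases j <;>
      (simp [Bm, Γ, ee, K, L, KL, ll, Matrix.vecHead, Matrix.vecTail, Matrix.mul_apply, Fin.sum_univ_four,
          QuaternionAlgebra.ext_iff, Complex.ext_iff] <;> ring_nf <;> norm_num)

/-- The null rotation B_θ = I + (θ/2)(Γ_p Γ_x + Γ_q Γ_x) (a conformal translation)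
acts on the x, p, q coefficients as stated, fixing Γ_t, Γ_y, Γ_z. -/
theorem conformal_translation_action (θ x p q : ℝ) :
    let bx := Γ Idx.p * Γ Idx.x + Γ Idx.q * Γ Idx.x
    let B : ℝ → Matrix (Fin 4) (Fin 4) SplitQC := fun s => 1 + (s / 2) • bx
    (B θ * (x • Γ Idx.x + p • Γ Idx.p + q • Γ Idx.q) * B (-θ) =
      (x + (p - q) * θ) • Γ Idx.x +
      (p + x * θ + (p - q) * θ ^ 2 / 2) • Γ Idx.p +
      (q + x * θ + (p - q) * θ ^ 2 / 2) • Γ Idx.q) ∧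
    (∀ c : Idx, c = Idx.t ∨ c = Idx.y ∨ c = Idx.z → B θ * Γ c * B (-θ) = Γ c) := by
  intro bx B
  constructor
  · show (1 + (θ/2) • bx) * _ * (1 + (-θ/2) • bx) = _
    rw [show bx = Γ Idx.p * Γ Idx.x + Γ Idx.q * Γ Idx.x from rfl, hB, hB, hM, hM, key1]
  · intro c hc
    show (1 + (θ/2) • bx) * _ * (1 + (-θ/2) • bx) = _
    rw [show bx = Γ Idx.p * Γ Idx.x + Γ Idx.q * Γ Idx.x from rfl, hB, hB, key2 θ c hc]
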